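/- Let 𝒜 be a real n×n matrix all of whose complex eigenvalues have strictly negative real part, and let 𝒫 be a real n×n matrix. Then the integral X = −∫₀^∞ exp(t𝒜) 𝒫 exp(t𝒜ᵀ) dt converges, and X satisfies the Lyapunov equation 𝒜X + X𝒜ᵀ = 𝒫. -/

import Mathlib

open Matrix MeasureTheory

attribute [local instance] Matrix.frobeniusNormedAddCommGroup Matrix.frobeniusNormedSpace
  Matrix.frobeniusNormedRing


open NormedSpace Filter

attribute [local instance] Matrix.frobeniusNormedAlgebra

lemma aux_poly_bound (k : ℕ) {δ : ℝ} (hδ : 0 < δ) :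
    ∃ C : ℝ, 0 ≤ C ∧ ∀ t : ℝ, 0 ≤ t → t ^ k * Real.exp (-δ * t) ≤ C := by
  have h0 : Filter.Tendsto (fun t : ℝ => t ^ k * Real.exp (-δ * t)) atTop (nhds 0) := by
    have h1 : Filter.Tendsto (fun t : ℝ => δ * t) atTop atTop :=
      Filter.Tendsto.const_mul_atTop hδ tendsto_id
    have h2 := (Real.tendsto_pow_mul_exp_neg_atTop_nhds_zero k).comp h1
    have h3 : Filter.Tendsto (fun t : ℝ => (δ⁻¹) ^ k * ((δ * t) ^ k * Real.exp (-(δ * t))))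
        atTop (nhds ((δ⁻¹) ^ k * 0)) := h2.const_mul _
    rw [mul_zero] at h3
    refine h3.congr (fun t => ?_)
    rw [mul_pow, neg_mul]
    field_simp
    rw [← mul_pow, one_div_mul_cancel hδ.ne', one_pow, one_mul]
  obtain ⟨T, hT⟩ := (Filter.eventually_atTop).mp (h0.eventually (eventually_le_nhds (by norm_num : (0:ℝ) < 1)))
  obtain ⟨C₀, hC₀⟩ := (isCompact_Icc (a := (0:ℝ)) (b := T)).exists_bound_of_continuousOn
    (Continuous.continuousOn (f := fun t : ℝ => t ^ k * Real.exp (-δ * t)) (by continuity))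
  refine ⟨max C₀ 1, le_trans zero_le_one (le_max_right _ _), fun t ht => ?_⟩
  rcases le_total t T with h | h
  · exact le_trans (le_trans (le_abs_self _) (hC₀ t ⟨ht, h⟩)) (le_max_left _ _)
  · exact le_trans (hT t h) (le_max_right _ _)

-- CLM "apply to w"
noncomputable def mulVecCLM {n : ℕ} (w : Fin n → ℂ) :
    Matrix (Fin n) (Fin n) ℂ →L[ℂ] (Fin n → ℂ) :=
  LinearMap.toContinuousLinearMap
    { toFun := fun M => M *ᵥ w
      map_add' := fun M N => Matrix.add_mulVec M N w
      map_smul' := fun c M => by simp [Matrix.smul_mulVec] }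

lemma exp_smul_mulVec_eq {n : ℕ} (B : Matrix (Fin n) (Fin n) ℂ) (μ : ℂ) (k : ℕ)
    (w : Fin n → ℂ) (hw : ((B - μ • 1) ^ k) *ᵥ w = 0) (t : ℝ) :
    NormedSpace.exp (t • B) *ᵥ w =
      Complex.exp (t • μ) •
        ∑ j ∈ Finset.range k, ((t ^ j * ((j.factorial : ℝ))⁻¹ : ℝ)) • ((B - μ • 1) ^ j *ᵥ w) := by
  set N := B - μ • 1 with hN
  have hsplit : t • B = t • (μ • (1 : Matrix (Fin n) (Fin n) ℂ)) + t • N := by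
    rw [← smul_add, hN]; congr 1; abel
  have hcomm : Commute (t • (μ • (1 : Matrix (Fin n) (Fin n) ℂ))) (t • N) :=
    (((Commute.one_left N).smul_left μ).smul_left t).smul_right t
  rw [hsplit, Matrix.exp_add_of_commute _ _ hcomm]
  have hscal : NormedSpace.exp (t • (μ • (1 : Matrix (Fin n) (Fin n) ℂ)))
      = Complex.exp (t • μ) • (1 : Matrix (Fin n) (Fin n) ℂ) := by
    have h1 : t • (μ • (1 : Matrix (Fin n) (Fin n) ℂ))
        = algebraMap ℂ (Matrix (Fin n) (Fin n) ℂ) (t • μ) := by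
      rw [Algebra.algebraMap_eq_smul_one, smul_assoc]
    rw [h1]
    refine (NormedSpace.algebraMap_exp_comm (t • μ)).symm.trans ?_
    rw [Algebra.algebraMap_eq_smul_one, Complex.exp_eq_exp_ℂ]
  rw [hscal, smul_mul_assoc, one_mul, Matrix.smul_mulVec]
  congr 1
  -- now exp ℝ (t • N) *ᵥ w = ∑ ...
  have hser : NormedSpace.exp (t • N) = ∑' j : ℕ, ((j.factorial : ℝ))⁻¹ • (t • N) ^ j := by
    rw [NormedSpace.exp_eq_tsum (𝕂 := ℝ)]
  rw [hser]
  have hmap := (mulVecCLM w).map_tsum (NormedSpace.expSeries_summable' (𝕂 := ℝ) (t • N))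
  have happ : ∀ (M : Matrix (Fin n) (Fin n) ℂ), mulVecCLM w M = M *ᵥ w := fun _ => rfl
  calc (∑' j : ℕ, ((j.factorial : ℝ))⁻¹ • (t • N) ^ j) *ᵥ w
      = mulVecCLM w (∑' j : ℕ, ((j.factorial : ℝ))⁻¹ • (t • N) ^ j) := rfl
    _ = ∑' j : ℕ, mulVecCLM w (((j.factorial : ℝ))⁻¹ • (t • N) ^ j) := hmap
    _ = ∑' j : ℕ, ((t ^ j * ((j.factorial : ℝ))⁻¹ : ℝ)) • (N ^ j *ᵥ w) := by
        refine tsum_congr fun j => ?_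
        simp only [happ, smul_pow, Matrix.smul_mulVec, smul_smul]
        rw [mul_comm]
    _ = ∑ j ∈ Finset.range k, ((t ^ j * ((j.factorial : ℝ))⁻¹ : ℝ)) • (N ^ j *ᵥ w) := by
        refine tsum_eq_sum fun j hj => ?_
        have hjk : k ≤ j := by simpa using hj
        have : N ^ j *ᵥ w = 0 := by
          rw [← Nat.sub_add_cancel hjk, pow_add, ← Matrix.mulVec_mulVec, hw, Matrix.mulVec_zero]
        rw [this, smul_zero]

lemma exp_mulVec_decay {n : ℕ} (B : Matrix (Fin n) (Fin n) ℂ) {ε : ℝ} (hε : 0 < ε)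
    (hspec : ∀ μ ∈ spectrum ℂ B, μ.re < -ε) (w : Fin n → ℂ) :
    ∃ C : ℝ, ∀ t : ℝ, 0 ≤ t → ‖NormedSpace.exp (t • B) *ᵥ w‖ ≤ C * Real.exp (-ε * t) := by
  set S : Submodule ℂ (Fin n → ℂ) :=
    { carrier := {w | ∃ C : ℝ, ∀ t : ℝ, 0 ≤ t →
        ‖NormedSpace.exp (t • B) *ᵥ w‖ ≤ C * Real.exp (-ε * t)}
      add_mem' := by
        rintro a b ⟨C₁, h₁⟩ ⟨C₂, h₂⟩
        refine ⟨C₁ + C₂, fun t ht => ?_⟩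
        rw [Matrix.mulVec_add, add_mul]
        exact le_trans (norm_add_le _ _) (add_le_add (h₁ t ht) (h₂ t ht))
      zero_mem' := ⟨0, fun t ht => by simp [Matrix.mulVec_zero]⟩
      smul_mem' := by
        rintro c a ⟨C, h⟩
        refine ⟨‖c‖ * C, fun t ht => ?_⟩
        rw [Matrix.mulVec_smul, norm_smul, mul_assoc]
        exact mul_le_mul_of_nonneg_left (h t ht) (norm_nonneg c) }
  suffices hS : w ∈ S from hS
  have htop : ⊤ ≤ S := by
    rw [← Module.End.iSup_maxGenEigenspace_eq_top (Matrix.toLinAlgEquiv' B)]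
    refine iSup_le fun μ v hv => ?_
    rcases eq_or_ne v 0 with rfl | hv0
    · exact S.zero_mem
    have hμspec : μ ∈ spectrum ℂ B := by
      rw [← AlgEquiv.spectrum_eq (Matrix.toLinAlgEquiv' (R := ℂ) (n := Fin n)) B]
      rw [← Module.End.hasEigenvalue_iff_mem_spectrum]
      obtain ⟨k, hk⟩ := (Module.End.mem_maxGenEigenspace _ _ _).mp hv
      have hk0 : k ≠ 0 := by
        rintro rfl; simp at hk; exact hv0 hk
      refine Module.End.hasEigenvalue_of_hasGenEigenvalue (k := k) ?_
      rw [Module.End.hasGenEigenvalue_iff, Submodule.ne_bot_iff]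
      exact ⟨v, Module.End.mem_genEigenspace_nat.mpr hk, hv0⟩
    obtain ⟨k, hk⟩ := (Module.End.mem_maxGenEigenspace _ _ _).mp hv
    -- translate to matrices
    have hmat : ((B - μ • 1) ^ k) *ᵥ v = 0 := by
      have : ((Matrix.toLinAlgEquiv' B - μ • 1) ^ k) =
          Matrix.toLinAlgEquiv' ((B - μ • 1) ^ k) := by
        rw [map_pow]
        congr 1
        rw [map_sub]
        congr 1
        rw [_root_.map_smul, _root_.map_one]
      rw [this] at hk
      rw [Matrix.toLinAlgEquiv'_apply] at hk
      exact hk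
    -- per-term constants
    have hδ : 0 < -(μ.re + ε) := by have := hspec μ hμspec; linarith
    choose Cf hCf0 hCf using fun j : ℕ => aux_poly_bound j hδ
    refine ⟨∑ j ∈ Finset.range k, Cf j * (((j.factorial : ℝ))⁻¹ * ‖(B - μ • 1) ^ j *ᵥ v‖),
      fun t ht => ?_⟩
    rw [exp_smul_mulVec_eq B μ k v hmat t, norm_smul]
    have hexpnorm : ‖Complex.exp (t • μ)‖ = Real.exp (t * μ.re) := by
      rw [Complex.norm_exp]
      congr 1
      simp [Complex.real_smul]
    rw [hexpnorm]
    calc Real.exp (t * μ.re) * ‖∑ j ∈ Finset.range k,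
          ((t ^ j * ((j.factorial : ℝ))⁻¹ : ℝ)) • ((B - μ • 1) ^ j *ᵥ v)‖
        ≤ Real.exp (t * μ.re) * ∑ j ∈ Finset.range k,
            (t ^ j * ((j.factorial : ℝ))⁻¹) * ‖(B - μ • 1) ^ j *ᵥ v‖ := by
          refine mul_le_mul_of_nonneg_left ?_ (Real.exp_nonneg _)
          refine le_trans (norm_sum_le _ _) (Finset.sum_le_sum fun j _ => ?_)
          rw [norm_smul, Real.norm_eq_abs, abs_of_nonneg (by positivity)]
      _ = ∑ j ∈ Finset.range k,
            (t ^ j * Real.exp (-(-(μ.re + ε)) * t)) * (((j.factorial : ℝ))⁻¹ * ‖(B - μ • 1) ^ j *ᵥ v‖)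
              * Real.exp (-ε * t) := by
          rw [Finset.mul_sum]
          refine Finset.sum_congr rfl fun j _ => ?_
          have hXY : Real.exp (t * μ.re) = Real.exp (-(-(μ.re + ε)) * t) * Real.exp (-ε * t) := by
            rw [← Real.exp_add]; congr 1; ring
          rw [hXY]; ring
      _ ≤ ∑ j ∈ Finset.range k,
            (Cf j) * (((j.factorial : ℝ))⁻¹ * ‖(B - μ • 1) ^ j *ᵥ v‖) * Real.exp (-ε * t) := by
          refine Finset.sum_le_sum fun j _ => ?_
          have := hCf j t ht
          refine mul_le_mul_of_nonneg_right (mul_le_mul_of_nonneg_right this (by positivity))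
            (Real.exp_nonneg _)
      _ = (∑ j ∈ Finset.range k,
            Cf j * (((j.factorial : ℝ))⁻¹ * ‖(B - μ • 1) ^ j *ᵥ v‖)) * Real.exp (-ε * t) := by
          rw [Finset.sum_mul]
  exact htop Submodule.mem_top

lemma exp_matrix_decay_complex {n : ℕ} (B : Matrix (Fin n) (Fin n) ℂ) {ε : ℝ} (hε : 0 < ε)
    (hspec : ∀ μ ∈ spectrum ℂ B, μ.re < -ε) :
    ∃ C : ℝ, 0 ≤ C ∧ ∀ t : ℝ, 0 ≤ t → ‖NormedSpace.exp (t • B)‖ ≤ C * Real.exp (-ε * t) := by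
  choose Cf hCf using fun j : Fin n => exp_mulVec_decay B hε hspec (Pi.single j 1)
  -- columns bound
  set D : ℝ := ∑ j : Fin n, max (Cf j) 0 with hD
  have hD0 : 0 ≤ D := Finset.sum_nonneg fun j _ => le_max_right _ _
  refine ⟨Real.sqrt n * D, by positivity, fun t ht => ?_⟩
  set M := NormedSpace.exp (t • B) with hM
  have hcol : ∀ i j, ‖M i j‖ ≤ max (Cf j) 0 * Real.exp (-ε * t) := by
    intro i j
    have h1 : M *ᵥ Pi.single j 1 = fun i => M i j := by
      funext i'; simp [Matrix.mulVec_single]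
    have h2 := hCf j t ht
    rw [h1] at h2
    calc ‖M i j‖ ≤ ‖fun i' => M i' j‖ := norm_le_pi_norm (fun i' => M i' j) i
      _ ≤ Cf j * Real.exp (-ε * t) := h2
      _ ≤ max (Cf j) 0 * Real.exp (-ε * t) :=
          mul_le_mul_of_nonneg_right (le_max_left _ _) (Real.exp_nonneg _)
  -- frobenius bound
  have hfrob : ‖M‖ = Real.sqrt (∑ i : Fin n, ∑ j : Fin n, ‖M i j‖ ^ 2) := by
    rw [Matrix.frobenius_norm_def, Real.sqrt_eq_rpow]
    norm_num
  rw [hfrob]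
  have hsum : (∑ i : Fin n, ∑ j : Fin n, ‖M i j‖ ^ 2)
      ≤ (n : ℝ) * (∑ j : Fin n, (max (Cf j) 0 * Real.exp (-ε * t)) ^ 2) := by
    rw [Finset.sum_comm]
    calc (∑ j : Fin n, ∑ i : Fin n, ‖M i j‖ ^ 2)
        ≤ ∑ j : Fin n, ∑ _i : Fin n, (max (Cf j) 0 * Real.exp (-ε * t)) ^ 2 := by
          refine Finset.sum_le_sum fun j _ => Finset.sum_le_sum fun i _ => ?_
          have := hcol i j
          have h0 : (0:ℝ) ≤ ‖M i j‖ := norm_nonneg _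
          nlinarith
      _ = (n : ℝ) * (∑ j : Fin n, (max (Cf j) 0 * Real.exp (-ε * t)) ^ 2) := by
          simp [Finset.mul_sum, Finset.sum_const, nsmul_eq_mul]
  calc Real.sqrt (∑ i : Fin n, ∑ j : Fin n, ‖M i j‖ ^ 2)
      ≤ Real.sqrt ((n : ℝ) * (∑ j : Fin n, (max (Cf j) 0 * Real.exp (-ε * t)) ^ 2)) :=
        Real.sqrt_le_sqrt hsum
    _ ≤ Real.sqrt ((n : ℝ) * (D * Real.exp (-ε * t)) ^ 2) := by
        refine Real.sqrt_le_sqrt (mul_le_mul_of_nonneg_left ?_ (Nat.cast_nonneg n))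
        have h1 : (∑ j : Fin n, max (Cf j) 0 * Real.exp (-ε * t)) = D * Real.exp (-ε * t) := by
          rw [hD, Finset.sum_mul]
        calc (∑ j : Fin n, (max (Cf j) 0 * Real.exp (-ε * t)) ^ 2)
            ≤ (∑ j : Fin n, max (Cf j) 0 * Real.exp (-ε * t)) ^ 2 :=
              Finset.sum_sq_le_sq_sum_of_nonneg fun j _ => by positivity
          _ = (D * Real.exp (-ε * t)) ^ 2 := by rw [h1]
    _ = Real.sqrt n * (D * Real.exp (-ε * t)) := by
        rw [Real.sqrt_mul (Nat.cast_nonneg n), Real.sqrt_sq (by positivity)]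
    _ = Real.sqrt n * D * Real.exp (-ε * t) := by ring

lemma exp_matrix_decay_real {n : ℕ} (A : Matrix (Fin n) (Fin n) ℝ)
    (hstable : ∀ μ ∈ spectrum ℂ (A.map (algebraMap ℝ ℂ)), μ.re < 0) :
    ∃ ε C : ℝ, 0 < ε ∧ 0 ≤ C ∧ ∀ t : ℝ, 0 ≤ t →
      ‖NormedSpace.exp (t • A)‖ ≤ C * Real.exp (-ε * t) := by
  classical
  set B := A.map (algebraMap ℝ ℂ) with hB
  obtain ⟨ε, hε0, hspec⟩ : ∃ ε : ℝ, 0 < ε ∧ ∀ μ ∈ spectrum ℂ B, μ.re < -ε := by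
    have hfin : (spectrum ℂ B).Finite := Matrix.finite_spectrum B
    by_cases hne : (spectrum ℂ B).Nonempty
    · have hFne : (hfin.toFinset.image Complex.re).Nonempty := by
        refine Finset.image_nonempty.mpr ?_
        rwa [Set.Finite.toFinset_nonempty]
      set m := (hfin.toFinset.image Complex.re).max' hFne with hm
      have hmlt : m < 0 := by
        obtain ⟨μ, hμmem, hμ⟩ := Finset.mem_image.mp ((hfin.toFinset.image Complex.re).max'_mem hFne)
        rw [hm, ← hμ]
        exact hstable μ (hfin.mem_toFinset.mp hμmem)
      refine ⟨-m / 2, by linarith, fun μ hμ => ?_⟩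
      have : μ.re ≤ m := Finset.le_max' _ _ (Finset.mem_image.mpr ⟨μ, hfin.mem_toFinset.mpr hμ, rfl⟩)
      linarith
    · exact ⟨1, one_pos, fun μ hμ => absurd ⟨μ, hμ⟩ hne⟩
  obtain ⟨C, hC0, hC⟩ := exp_matrix_decay_complex B hε0 hspec
  refine ⟨ε, C, hε0, hC0, fun t ht => ?_⟩
  have hnorm : ∀ M : Matrix (Fin n) (Fin n) ℝ, ‖M.map (algebraMap ℝ ℂ)‖ = ‖M‖ := by
    intro M
    rw [Matrix.frobenius_norm_def, Matrix.frobenius_norm_def]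
    congr 1
    refine Finset.sum_congr rfl fun i _ => Finset.sum_congr rfl fun j _ => ?_
    simp [Matrix.map_apply]
  have hmapexp : (NormedSpace.exp (t • A)).map (algebraMap ℝ ℂ) = NormedSpace.exp (t • B) := by
    set φ : Matrix (Fin n) (Fin n) ℝ →ₐ[ℝ] Matrix (Fin n) (Fin n) ℂ :=
      (AlgHom.mapMatrix (Algebra.ofId ℝ ℂ)) with hφ
    have hcont : Continuous φ := φ.toLinearMap.continuous_of_finiteDimensional
    have h1 : φ (NormedSpace.exp (t • A)) = NormedSpace.exp (φ (t • A)) :=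
      map_exp φ hcont (t • A)
    have h2 : ∀ M : Matrix (Fin n) (Fin n) ℝ, φ M = M.map (algebraMap ℝ ℂ) := by
      intro M
      rw [hφ, AlgHom.mapMatrix_apply]
      congr 1
    have h3 : φ (t • A) = t • B := by
      rw [_root_.map_smul, h2]
    rw [← h2, h1, h3]
  calc ‖NormedSpace.exp (t • A)‖
      = ‖NormedSpace.exp (t • B)‖ := by rw [← hmapexp, hnorm]
    _ ≤ C * Real.exp (-ε * t) := hC t ht

/-- **Integral representation of the solution of the Lyapunov equation.**
Let `A` be a real `n × n` matrix all of whose complex eigenvalues have strictly negative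
real part (Hurwitz), and let `P` be a real `n × n` matrix. Then the integral
`X = −∫₀^∞ exp(tA) P exp(tAᵀ) dt` converges, and `X` satisfies the Lyapunov equation
`AX + XAᵀ = P`. -/
theorem lyapunov_integral_representation {n : ℕ}
    (A P : Matrix (Fin n) (Fin n) ℝ)
    (hstable : ∀ μ ∈ spectrum ℂ (A.map (algebraMap ℝ ℂ)), μ.re < 0) :
    @IntegrableOn _ _ _ UniformSpace.toTopologicalSpace SeminormedAddGroup.toContinuousENorm
      (fun t : ℝ => NormedSpace.exp (t • A) * P * NormedSpace.exp (t • Aᵀ))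
      (Set.Ioi (0 : ℝ)) volume ∧
    (A * (-(∫ t in Set.Ioi (0 : ℝ),
          NormedSpace.exp (t • A) * P * NormedSpace.exp (t • Aᵀ)))
      + (-(∫ t in Set.Ioi (0 : ℝ),
          NormedSpace.exp (t • A) * P * NormedSpace.exp (t • Aᵀ))) * Aᵀ
      = P) := by
  obtain ⟨ε, C, hε0, hC0, hC⟩ := exp_matrix_decay_real A hstable
  set g : ℝ → Matrix (Fin n) (Fin n) ℝ :=
    fun t => NormedSpace.exp (t • A) * P * NormedSpace.exp (t • Aᵀ) with hg
  have hT : ∀ t : ℝ, NormedSpace.exp (t • Aᵀ) = (NormedSpace.exp (t • A))ᵀ := by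
    intro t
    rw [← Matrix.transpose_smul, Matrix.exp_transpose]
  have hgbound : ∀ t : ℝ, 0 ≤ t → ‖g t‖ ≤ C * C * ‖P‖ * Real.exp (-(2 * ε) * t) := by
    intro t ht
    have h1 := hC t ht
    have h2 : ‖NormedSpace.exp (t • Aᵀ)‖ ≤ C * Real.exp (-ε * t) := by
      rw [hT t, Matrix.frobenius_norm_transpose]; exact h1
    calc ‖g t‖ ≤ ‖NormedSpace.exp (t • A) * P‖ * ‖NormedSpace.exp (t • Aᵀ)‖ :=
          norm_mul_le _ _
      _ ≤ ‖NormedSpace.exp (t • A)‖ * ‖P‖ * ‖NormedSpace.exp (t • Aᵀ)‖ :=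
          mul_le_mul_of_nonneg_right (norm_mul_le _ _) (norm_nonneg _)
      _ ≤ (C * Real.exp (-ε * t)) * ‖P‖ * (C * Real.exp (-ε * t)) := by
          refine mul_le_mul ?_ h2 (norm_nonneg _) (by positivity)
          exact mul_le_mul_of_nonneg_right h1 (norm_nonneg _)
      _ = C * C * ‖P‖ * (Real.exp (-ε * t) * Real.exp (-ε * t)) := by ring
      _ = C * C * ‖P‖ * Real.exp (-(2 * ε) * t) := by
          rw [← Real.exp_add]; congr 1; ring
  have hgcont : @Continuous _ _ _ (@UniformSpace.toTopologicalSpace _ PseudoMetricSpace.toUniformSpace) g := by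
    have he1 : Continuous fun t : ℝ => NormedSpace.exp (t • A) :=
      NormedSpace.exp_continuous.comp (continuous_id.smul continuous_const)
    have he2 : Continuous fun t : ℝ => NormedSpace.exp (t • Aᵀ) :=
      NormedSpace.exp_continuous.comp (continuous_id.smul continuous_const)
    exact (he1.mul continuous_const).mul he2
  -- integrability of g
  have hgint : @IntegrableOn _ _ _ UniformSpace.toTopologicalSpace SeminormedAddGroup.toContinuousENorm g (Set.Ioi (0 : ℝ)) volume := by
    refine Integrable.mono'
      ((exp_neg_integrableOn_Ioi 0 (by positivity : (0:ℝ) < 2 * ε)).const_mul (C * C * ‖P‖))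
      hgcont.aestronglyMeasurable.restrict ?_
    filter_upwards [ae_restrict_mem measurableSet_Ioi] with t ht
    exact hgbound t (le_of_lt ht)
  refine ⟨hgint, ?_⟩
  -- derivative
  have hderiv : ∀ t : ℝ, HasDerivAt g (A * g t + g t * Aᵀ) t := by
    intro t
    have h1 : HasDerivAt (fun u : ℝ => NormedSpace.exp (u • A))
        (A * NormedSpace.exp (t • A)) t := hasDerivAt_exp_smul_const' A t
    have h2 : HasDerivAt (fun u : ℝ => NormedSpace.exp (u • Aᵀ))
        (NormedSpace.exp (t • Aᵀ) * Aᵀ) t := hasDerivAt_exp_smul_const Aᵀ t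
    have h3 := (h1.mul_const P).mul h2
    refine h3.congr_deriv ?_
    rw [hg]
    dsimp only
    noncomm_ring
  -- tendsto 0
  have htend : Tendsto g atTop (nhds 0) := by
    have hb : Tendsto (fun t : ℝ => C * C * ‖P‖ * Real.exp (-(2 * ε) * t)) atTop (nhds 0) := by
      have h1 : Tendsto (fun t : ℝ => Real.exp (-(2 * ε) * t)) atTop (nhds 0) := by
        have h2 : Tendsto (fun t : ℝ => (2 * ε) * t) atTop atTop :=
          Tendsto.const_mul_atTop (by positivity) tendsto_id
        have h3 := Real.tendsto_exp_neg_atTop_nhds_zero.comp h2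
        refine h3.congr fun t => ?_
        simp [Function.comp, neg_mul]
      simpa using h1.const_mul (C * C * ‖P‖)
    refine squeeze_zero_norm' ?_ hb
    filter_upwards [eventually_ge_atTop (0:ℝ)] with t ht
    exact hgbound t ht
  -- integrability of derivative
  set Ll : Matrix (Fin n) (Fin n) ℝ →L[ℝ] Matrix (Fin n) (Fin n) ℝ :=
    LinearMap.toContinuousLinearMap (LinearMap.mulLeft ℝ A) with hLl
  set Lr : Matrix (Fin n) (Fin n) ℝ →L[ℝ] Matrix (Fin n) (Fin n) ℝ :=
    LinearMap.toContinuousLinearMap (LinearMap.mulRight ℝ Aᵀ) with hLr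
  have hLla : ∀ M, Ll M = A * M := fun _ => rfl
  have hLra : ∀ M, Lr M = M * Aᵀ := fun _ => rfl
  have hlint : @Integrable _ UniformSpace.toTopologicalSpace SeminormedAddGroup.toContinuousENorm _ _ (fun t => A * g t) (volume.restrict (Set.Ioi (0:ℝ))) := by
    have := Ll.integrable_comp hgint
    exact this
  have hrint : @Integrable _ UniformSpace.toTopologicalSpace SeminormedAddGroup.toContinuousENorm _ _ (fun t => g t * Aᵀ) (volume.restrict (Set.Ioi (0:ℝ))) := by
    have := Lr.integrable_comp hgint
    exact this
  have hABint : @IntegrableOn _ _ _ UniformSpace.toTopologicalSpace SeminormedAddGroup.toContinuousENorm (fun t => A * g t + g t * Aᵀ) (Set.Ioi (0 : ℝ)) volume :=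
    hlint.add hrint
  have hFTC : ∫ t in Set.Ioi (0:ℝ), (A * g t + g t * Aᵀ) = 0 - g 0 :=
    integral_Ioi_of_hasDerivAt_of_tendsto (hgcont.continuousWithinAt)
      (fun x _ => hderiv x) hABint htend
  have hg0 : g 0 = P := by
    rw [hg]; simp
  have hsplit : ∫ t in Set.Ioi (0:ℝ), (A * g t + g t * Aᵀ)
      = A * (∫ t in Set.Ioi (0:ℝ), g t) + (∫ t in Set.Ioi (0:ℝ), g t) * Aᵀ := by
    rw [integral_add hlint hrint]
    congr 1
    · have := ContinuousLinearMap.integral_comp_comm Ll hgint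
      exact this
    · have := ContinuousLinearMap.integral_comp_comm Lr hgint
      exact this
  rw [hsplit, hg0] at hFTC
  rw [mul_neg, neg_mul, ← neg_add]
  rw [hFTC]
  abel
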